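/- If a ∈ R has a Hirano inverse b, then b itself has a Hirano inverse, namely a²b. -/

import Mathlib

def IsHiranoInverse {R : Type*} [Ring R] (a b : R) : Prop :=
  IsNilpotent (a ^ 2 - a * b) ∧ a * b = b * a ∧ b = b * a * b

theorem stmt6 {R : Type*} [Ring R] (a b : R) (h : IsHiranoInverse a b) :
    IsHiranoInverse b (a ^ 2 * b) := by
  obtain ⟨hn, hc, hb⟩ := h
  have hc' : ∀ x : R, b * (a * x) = a * (b * x) := fun x => by
    rw [← mul_assoc, ← hc, mul_assoc]
  have hab2 : a * b * b = b := by rw [hc, ← hb]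
  have hab2a : a * (b * b) = b := by rw [← mul_assoc, hab2]
  have hab2' : ∀ x : R, a * (b * (b * x)) = b * x := fun x => by
    rw [← mul_assoc, ← mul_assoc, hab2]
  refine ⟨?_, ?_, ?_⟩
  · have hbba : b * (b * (b * a)) = b * b := by
      rw [← hc]; simp only [hc', hab2']
    have key : b ^ 2 - b * (a ^ 2 * b) = -((b * b) * (a ^ 2 - a * b)) := by
      simp only [pow_two, mul_sub, sub_mul, mul_assoc, hc', hab2', hab2a, hc, hbba, neg_sub]
    rw [key]
    apply IsNilpotent.neg
    have hba : Commute b a := hc.symm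
    have hbb : Commute (b * b) (a ^ 2 - a * b) :=
      ((hba.mul_left hba).pow_right 2).sub_right
        ((hba.mul_left hba).mul_right ((Commute.refl b).mul_left (Commute.refl b)))
    exact hbb.isNilpotent_mul_left hn
  · simp only [pow_two, mul_assoc, hc']
  · simp only [pow_two, mul_assoc, hc', hab2', hab2a, hc]
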